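/- Let U ⊆ ℂ be a connected open set, let I ⊆ U ∩ ℝ be a nonempty open interval, let n ≥ 1, and let G : U → ℂ be holomorphic with G real-valued on I. Suppose that for every connected open V ⊆ U with I ⊆ V and all holomorphic h₁,…,h_k : V → ℂ such that each hᵢ′ is algebraic over (z, h₁,…,h_k) on V (i.e., some nonzero complex polynomial vanishes identically at (z, h₁(z),…,h_k(z), hᵢ′(z)) on V), either G, G′,…,G^{(n-1)} are algebraically independent over (z, h₁,…,h_k) on V, or G is algebraic over (z, h₁,…,h_k) on V. Then the restriction g = G|_I : I → ℝ satisfies the strong-minimality dichotomy of order n on I. (This is the complex-to-real transfer step in the proof of Theorem A: strong minimality of the differential equation over ℂ yields the real dichotomy for the restricted function.) -/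

import Mathlib

open MvPolynomial

noncomputable section

/-- `g₁,…,g_r` are algebraically dependent over `(x, h₁,…,h_k)` on `I ⊆ ℝ`. -/
def AlgDepOn (I : Set ℝ) {k r : ℕ} (h : Fin k → ℝ → ℝ) (g : Fin r → ℝ → ℝ) : Prop :=
  ∃ P : MvPolynomial (Fin (k + 1 + r)) ℝ, P ≠ 0 ∧
    ∀ x ∈ I, MvPolynomial.eval
      (Fin.append (Fin.cons x fun j => h j x) fun j => g j x) P = 0

/-- `g` is algebraic over `(x, h₁,…,h_k)` on `I ⊆ ℝ`. -/
def AlgebraicOver (I : Set ℝ) {k : ℕ} (h : Fin k → ℝ → ℝ) (g : ℝ → ℝ) : Prop :=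
  AlgDepOn I h ![g]

/-- `g` satisfies the strong-minimality dichotomy of order `n` on `I`. -/
def StrongMinDichotomy (I : Set ℝ) (n : ℕ) (g : ℝ → ℝ) : Prop :=
  ∀ (k : ℕ) (h : Fin k → ℝ → ℝ),
    (∀ i, AnalyticOnNhd ℝ (h i) I) →
    (∀ i, AlgebraicOver I h (deriv (h i))) →
    (¬ AlgDepOn I h fun j : Fin n => deriv^[(j : ℕ)] g) ∨ AlgebraicOver I h g

/-- `g₁,…,g_r` are algebraically dependent over `(z, h₁,…,h_k)` on `V ⊆ ℂ`. -/
def CAlgDepOn (V : Set ℂ) {k r : ℕ} (h : Fin k → ℂ → ℂ) (g : Fin r → ℂ → ℂ) : Prop :=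
  ∃ P : MvPolynomial (Fin (k + 1 + r)) ℂ, P ≠ 0 ∧
    ∀ z ∈ V, MvPolynomial.eval
      (Fin.append (Fin.cons z fun j => h j z) fun j => g j z) P = 0

/-- `g` is algebraic over `(z, h₁,…,h_k)` on `V ⊆ ℂ`. -/
def CAlgebraicOver (V : Set ℂ) {k : ℕ} (h : Fin k → ℂ → ℂ) (g : ℂ → ℂ) : Prop :=
  CAlgDepOn V h ![g]

section Helpers
open Set FormalMultilinearSeries
open scoped Topology

lemma eval_map_ofReal' {m : ℕ} (P : MvPolynomial (Fin m) ℝ) (v : Fin m → ℝ) :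
    eval (fun i => (v i : ℂ)) (MvPolynomial.map Complex.ofRealHom P) = ((eval v P : ℝ) : ℂ) := by
  rw [← MvPolynomial.eval₂_eq_eval_map]
  have := MvPolynomial.eval₂_comp_left Complex.ofRealHom (RingHom.id ℝ) v P
  simpa [MvPolynomial.eval₂_id, Function.comp_def, Complex.ofRealHom_eq_coe] using this.symm

def rePart {m : ℕ} (P : MvPolynomial (Fin m) ℂ) : MvPolynomial (Fin m) ℝ :=
  ∑ d ∈ P.support, monomial d ((P.coeff d).re)

def imPart {m : ℕ} (P : MvPolynomial (Fin m) ℂ) : MvPolynomial (Fin m) ℝ :=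
  ∑ d ∈ P.support, monomial d ((P.coeff d).im)

lemma coeff_rePart {m : ℕ} (P : MvPolynomial (Fin m) ℂ) (d) :
    coeff d (rePart P) = (P.coeff d).re := by
  rw [rePart, MvPolynomial.coeff_sum]
  simp only [MvPolynomial.coeff_monomial]
  rw [Finset.sum_ite_eq']
  by_cases h : d ∈ P.support
  · simp [h]
  · simp [h, MvPolynomial.notMem_support_iff.mp h]

lemma coeff_imPart {m : ℕ} (P : MvPolynomial (Fin m) ℂ) (d) :
    coeff d (imPart P) = (P.coeff d).im := by
  rw [imPart, MvPolynomial.coeff_sum]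
  simp only [MvPolynomial.coeff_monomial]
  rw [Finset.sum_ite_eq']
  by_cases h : d ∈ P.support
  · simp [h]
  · simp [h, MvPolynomial.notMem_support_iff.mp h]

lemma rePart_imPart_decomp {m : ℕ} (P : MvPolynomial (Fin m) ℂ) :
    P = MvPolynomial.map Complex.ofRealHom (rePart P)
      + MvPolynomial.C Complex.I * MvPolynomial.map Complex.ofRealHom (imPart P) := by
  ext d
  simp [MvPolynomial.coeff_map, coeff_rePart, coeff_imPart, MvPolynomial.coeff_C_mul]
  rw [mul_comm]
  exact (Complex.re_add_im _).symm

lemma eval_real_decomp {m : ℕ} (P : MvPolynomial (Fin m) ℂ) (v : Fin m → ℝ) :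
    eval (fun i => (v i : ℂ)) P
      = (eval v (rePart P) : ℂ) + Complex.I * (eval v (imPart P) : ℂ) := by
  conv_lhs => rw [rePart_imPart_decomp P]
  rw [MvPolynomial.eval_add, MvPolynomial.eval_mul, MvPolynomial.eval_C,
    eval_map_ofReal', eval_map_ofReal']

lemma eval_real_zero {m : ℕ} (P : MvPolynomial (Fin m) ℂ) (v : Fin m → ℝ)
    (h : eval (fun i => (v i : ℂ)) P = 0) :
    eval v (rePart P) = 0 ∧ eval v (imPart P) = 0 := by
  rw [eval_real_decomp] at h
  have hre := congrArg Complex.re h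
  have him := congrArg Complex.im h
  simp at hre him
  exact ⟨hre, him⟩

lemma parts_ne_zero {m : ℕ} (P : MvPolynomial (Fin m) ℂ) (h : P ≠ 0) :
    rePart P ≠ 0 ∨ imPart P ≠ 0 := by
  by_contra hc
  push_neg at hc
  exact h (by rw [rePart_imPart_decomp P, hc.1, hc.2]; simp)

lemma map_ofReal_ne_zero {m : ℕ} (P : MvPolynomial (Fin m) ℝ) (h : P ≠ 0) :
    MvPolynomial.map Complex.ofRealHom P ≠ 0 := fun hc =>
  h (MvPolynomial.map_injective Complex.ofRealHom Complex.ofReal_injective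
    (by rw [hc]; simp))

lemma differentiableOn_eval {m : ℕ} (P : MvPolynomial (Fin m) ℂ) (v : Fin m → ℂ → ℂ)
    (V : Set ℂ) (hv : ∀ i, DifferentiableOn ℂ (v i) V) :
    DifferentiableOn ℂ (fun z => eval (fun i => v i z) P) V := by
  induction P using MvPolynomial.induction_on with
  | C a => simpa using differentiableOn_const a
  | add p q hp hq => simp only [MvPolynomial.eval_add]; exact hp.add hq
  | mul_X p i hp => simp only [MvPolynomial.eval_mul, MvPolynomial.eval_X]; exact hp.mul (hv i)

lemma differentiableOn_aux {k r : ℕ} (H : Fin k → ℂ → ℂ) (Gv : Fin r → ℂ → ℂ) (V : Set ℂ)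
    (hH : ∀ j, DifferentiableOn ℂ (H j) V) (hG : ∀ j, DifferentiableOn ℂ (Gv j) V)
    (P : MvPolynomial (Fin (k+1+r)) ℂ) :
    DifferentiableOn ℂ
      (fun z => eval (Fin.append (Fin.cons z fun j => H j z) fun j => Gv j z) P) V := by
  have := differentiableOn_eval P
    (fun idx z => Fin.append (Fin.cons z fun j => H j z) (fun j => Gv j z) idx) V ?_
  · exact this
  intro idx
  refine Fin.addCases (fun j => ?_) (fun j => ?_) idx
  · simp only [Fin.append_left]
    refine Fin.cases ?_ (fun j' => ?_) j
    · show DifferentiableOn ℂ (fun z : ℂ => z) V; exact differentiableOn_id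
    · simpa using hH j'
  · simpa only [Fin.append_right] using hG j

lemma vec_match {k r : ℕ} (H : Fin k → ℂ → ℂ) (Gv : Fin r → ℂ → ℂ)
    (h : Fin k → ℝ → ℝ) (g : Fin r → ℝ → ℝ) (t : ℝ)
    (hH : ∀ j, H j ↑t = ↑(h j t)) (hG : ∀ j, Gv j ↑t = ↑(g j t)) :
    (Fin.append (Fin.cons ((t:ℝ):ℂ) fun j => H j ↑t) fun j => Gv j ↑t)
      = fun idx => (((Fin.append (Fin.cons t fun j => h j t) fun j => g j t) idx : ℝ) : ℂ) := by
  funext idx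
  refine Fin.addCases (fun j => ?_) (fun j => ?_) idx
  · simp only [Fin.append_left]
    refine Fin.cases ?_ (fun j' => ?_) j
    · simp
    · simp [hH]
  · simp [Fin.append_right, hG]

lemma freq_ofReal {t₀ : ℝ} {p : ℂ → Prop} (h : ∀ᶠ s : ℝ in 𝓝[≠] t₀, p ↑s) :
    ∃ᶠ z in 𝓝[≠] (t₀ : ℂ), p z := by
  have htend : Filter.Tendsto (fun s : ℝ => (s : ℂ)) (𝓝[≠] t₀) (𝓝[≠] (t₀ : ℂ)) := by
    refine Filter.Tendsto.inf ?_ ?_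
    · exact Complex.continuous_ofReal.tendsto t₀
    · refine Filter.tendsto_principal_principal.2 ?_
      intro s hs
      simpa [Complex.ofReal_inj] using hs
  exact htend.frequently h.frequently

lemma eqOn_zero_of_real_zero {V : Set ℂ} (hVo : IsOpen V) (hVc : IsPreconnected V)
    {φ : ℂ → ℂ} (hφ : DifferentiableOn ℂ φ V) {a b : ℝ} (hab : a < b)
    (hsub : ∀ t ∈ Ioo a b, (t : ℂ) ∈ V) (hz : ∀ t ∈ Ioo a b, φ t = 0) :
    ∀ z ∈ V, φ z = 0 := by
  set t₀ : ℝ := (a + b) / 2 with ht₀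
  have ht₀I : t₀ ∈ Ioo a b := ⟨by linarith, by linarith⟩
  have hfreq : ∃ᶠ z in 𝓝[≠] (t₀ : ℂ), φ z = 0 := by
    apply freq_ofReal
    have hIoo : Ioo a b ∈ 𝓝[≠] t₀ :=
      nhdsWithin_le_nhds (Ioo_mem_nhds ht₀I.1 ht₀I.2)
    filter_upwards [hIoo] with s hs using hz s hs
  exact fun z hz' =>
    (hφ.analyticOnNhd hVo).eqOn_zero_of_preconnected_of_frequently_eq_zero hVc
      (hsub t₀ ht₀I) hfreq hz'

lemma deriv_ext_eq {F : ℂ → ℂ} {f : ℝ → ℝ} {t : ℝ}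
    (hF : DifferentiableAt ℂ F ↑t) (hf : DifferentiableAt ℝ f t)
    (heq : ∀ᶠ s : ℝ in 𝓝 t, F ↑s = ↑(f s)) :
    deriv F ↑t = ((deriv f t : ℝ) : ℂ) := by
  have h1 : HasDerivAt (fun y : ℝ => F ↑y) (deriv F ↑t) t := hF.hasDerivAt.comp_ofReal
  have h2 : HasDerivAt (fun y : ℝ => ((f y : ℝ) : ℂ)) ((deriv f t : ℝ) : ℂ) t :=
    hf.hasDerivAt.ofReal_comp
  exact h1.unique (h2.congr_of_eventuallyEq heq)

lemma deriv_real_of_real {F : ℂ → ℂ} {t : ℝ}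
    (hF : DifferentiableAt ℂ F ↑t) (him : ∀ᶠ s : ℝ in 𝓝 t, (F ↑s).im = 0) :
    deriv F ↑t = ((deriv (fun s : ℝ => (F ↑s).re) t : ℝ) : ℂ) := by
  set d := deriv F ↑t with hd
  have hD : HasDerivAt F d ↑t := hF.hasDerivAt
  have hre : HasDerivAt (fun s : ℝ => (F ↑s).re) d.re t := hD.real_of_complex
  have himd : d.im = 0 := by
    have hI : HasDerivAt (fun z => Complex.I * F z) (Complex.I * d) ↑t := hD.const_mul _
    have hre2 : HasDerivAt (fun s : ℝ => (Complex.I * F ↑s).re) (Complex.I * d).re t :=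
      hI.real_of_complex
    have hzero : HasDerivAt (fun _ : ℝ => (0 : ℝ)) (0 : ℝ) t := hasDerivAt_const _ _
    have : (Complex.I * d).re = 0 := by
      refine HasDerivAt.unique (hre2.congr_of_eventuallyEq ?_) hzero
      filter_upwards [him] with s hs
      simp [Complex.mul_re, hs]
    simpa using this
  rw [hre.deriv]
  exact Complex.ext (by simp) (by simp [himd])

lemma iter_deriv_diffOn {U : Set ℂ} (hUo : IsOpen U) {G : ℂ → ℂ}
    (hG : DifferentiableOn ℂ G U) (j : ℕ) : DifferentiableOn ℂ (deriv^[j] G) U := by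
  induction j with
  | zero => exact hG
  | succ j ih =>
    rw [Function.iterate_succ_apply']
    exact ((ih.analyticOnNhd hUo).deriv).differentiableOn

lemma iter_deriv_match {U : Set ℂ} (hUo : IsOpen U) {G : ℂ → ℂ}
    (hG : DifferentiableOn ℂ G U) {a b : ℝ}
    (hIU : ∀ t ∈ Ioo a b, (t : ℂ) ∈ U)
    (hreal : ∀ t ∈ Ioo a b, (G ↑t).im = 0) (j : ℕ) :
    ∀ t ∈ Ioo a b, deriv^[j] G ↑t
      = ((deriv^[j] (fun s : ℝ => (G ↑s).re) t : ℝ) : ℂ) := by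
  induction j with
  | zero =>
    intro t ht
    simp only [Function.iterate_zero, _root_.id]
    exact Complex.ext (by simp) (by simp [hreal t ht])
  | succ j ih =>
    intro t ht
    have hIoo : Ioo a b ∈ 𝓝 t := Ioo_mem_nhds ht.1 ht.2
    have hdiff : DifferentiableAt ℂ (deriv^[j] G) ↑t :=
      ((iter_deriv_diffOn hUo hG j).differentiableAt (hUo.mem_nhds (hIU t ht)))
    have him : ∀ᶠ s : ℝ in 𝓝 t, ((deriv^[j] G) ↑s).im = 0 := by
      filter_upwards [hIoo] with s hs
      rw [ih s hs]; simp
    rw [Function.iterate_succ_apply', Function.iterate_succ_apply']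
    rw [deriv_real_of_real hdiff him]
    norm_cast
    apply Filter.EventuallyEq.deriv_eq
    filter_upwards [hIoo] with s hs
    rw [ih s hs]; simp

section Ext
open Set FormalMultilinearSeries
open scoped Topology
lemma dist_ofReal' (a b : ℝ) : dist (a:ℂ) (b:ℂ) = dist a b := by
  rw [Complex.dist_eq, ← Complex.ofReal_sub, Complex.norm_real]; rfl

/-- A real-analytic germ extends holomorphically to a complex ball. -/
lemma local_ext (f : ℝ → ℝ) (x : ℝ) (hf : AnalyticAt ℝ f x) :
    ∃ (ρ : ℝ) (Fx : ℂ → ℂ), 0 < ρ ∧ DifferentiableOn ℂ Fx (Metric.ball (x:ℂ) ρ) ∧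
      ∀ s : ℝ, (s:ℂ) ∈ Metric.ball (x:ℂ) ρ → Fx ↑s = ↑(f s) := by
  obtain ⟨p, r, hp⟩ := hf
  obtain ⟨c, hc0, hcr⟩ := ENNReal.lt_iff_exists_nnreal_btwn.mp hp.r_pos
  have hc0' : 0 < (c:ℝ) := by exact_mod_cast ENNReal.coe_pos.mp hc0
  set q : FormalMultilinearSeries ℂ ℂ ℂ := ofScalars ℂ (fun n => (p.coeff n : ℂ)) with hq
  have hqr : (c : ENNReal) ≤ q.radius := by
    obtain ⟨C, _, hC⟩ := p.norm_mul_pow_le_of_lt_radius (lt_of_lt_of_le hcr hp.r_le)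
    refine q.le_radius_of_bound C fun n => ?_
    calc ‖q n‖ * (c:ℝ)^n = ‖p n‖ * (c:ℝ)^n := by
          rw [hq, ofScalars_norm, Complex.norm_real, ← p.norm_apply_eq_norm_coef]
      _ ≤ C := hC n
  have hq0 : 0 < q.radius := lt_of_lt_of_le hc0 hqr
  have hmem : ∀ z : ℂ, z ∈ Metric.ball (x:ℂ) (c:ℝ) → (z - ↑x) ∈ Metric.eball (0:ℂ) q.radius := by
    intro z hz
    rw [Metric.mem_ball, dist_eq_norm] at hz
    rw [mem_emetric_ball_zero_iff]
    refine lt_of_lt_of_le ?_ hqr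
    exact_mod_cast (by rwa [← NNReal.coe_lt_coe, coe_nnnorm] : ‖z - ↑x‖₊ < c)
  refine ⟨c, fun z => q.sum (z - ↑x), hc0', ?_, ?_⟩
  · have hsum : DifferentiableOn ℂ q.sum (Metric.eball 0 q.radius) :=
      (q.hasFPowerSeriesOnBall hq0).differentiableOn
    have : DifferentiableOn ℂ (q.sum ∘ fun z => z - (x:ℂ)) (Metric.ball (x:ℂ) (c:ℝ)) :=
      DifferentiableOn.comp hsum (differentiableOn_id.sub (differentiableOn_const _)) hmem
    exact this
  · intro s hs
    have hdist : dist s x < (c:ℝ) := by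
      rw [← dist_ofReal']; exact Metric.mem_ball.mp hs
    have hmemr : (s - x : ℝ) ∈ Metric.eball (0:ℝ) r := by
      rw [mem_emetric_ball_zero_iff]
      refine lt_trans ?_ hcr
      rw [Real.dist_eq] at hdist
      exact_mod_cast (by rwa [← NNReal.coe_lt_coe, coe_nnnorm, Real.norm_eq_abs] :
        ‖s - x‖₊ < c)
    have h1 : HasSum (fun n => (s-x)^n • p.coeff n) (f s) := by
      have := hp.hasSum (y := s - x) hmemr
      simp only [p.apply_eq_pow_smul_coeff] at this
      rwa [show x + (s - x) = s by ring] at this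
    have h1' : HasSum (fun n => (((s-x)^n • p.coeff n : ℝ) : ℂ)) ((f s : ℝ) : ℂ) :=
      Complex.ofRealCLM.hasSum h1
    have key : (fun n => (((s-x)^n • p.coeff n : ℝ) : ℂ))
        = fun n => q n (fun _ => ((s:ℂ) - ↑x)) := by
      funext n
      rw [hq, ofScalars_apply_eq]
      simp only [smul_eq_mul]
      push_cast
      ring
    rw [key] at h1'
    exact ((q.hasSum (hmem _ hs)).unique h1')

/-- Gluing local extensions: a real-analytic function on `Ioo a b` extends
holomorphically to an open set containing the interval, inside `U`. -/
lemma exists_holo_ext (f : ℝ → ℝ) {a b : ℝ} (hf : AnalyticOnNhd ℝ f (Ioo a b))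
    (U : Set ℂ) (hU : IsOpen U) (hIU : ∀ t ∈ Ioo a b, (t : ℂ) ∈ U) :
    ∃ (V : Set ℂ) (F : ℂ → ℂ), IsOpen V ∧ V ⊆ U ∧ (∀ t ∈ Ioo a b, (t : ℂ) ∈ V) ∧
      DifferentiableOn ℂ F V ∧ ∀ t ∈ Ioo a b, F ↑t = ↑(f t) := by
  have H : ∀ x : ℝ, x ∈ Ioo a b → ∃ (ρ : ℝ) (Fx : ℂ → ℂ), 0 < ρ ∧
      Metric.ball (x:ℂ) ρ ⊆ U ∧ DifferentiableOn ℂ Fx (Metric.ball (x:ℂ) ρ) ∧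
      ∀ s : ℝ, (s:ℂ) ∈ Metric.ball (x:ℂ) ρ → Fx ↑s = ↑(f s) := by
    intro x hx
    obtain ⟨ρ, Fx, hρ, hFd, hFr⟩ := local_ext f x (hf x hx)
    obtain ⟨ε, hε, hεU⟩ := Metric.isOpen_iff.mp hU (↑x) (hIU x hx)
    refine ⟨min ρ ε, Fx, lt_min hρ hε, ?_, hFd.mono ?_, fun s hs => hFr s ?_⟩
    · exact (Metric.ball_subset_ball (min_le_right _ _)).trans hεU
    · exact Metric.ball_subset_ball (min_le_left _ _)
    · exact Metric.ball_subset_ball (min_le_left _ _) hs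
  choose ρ F hρ hsubU hFd hFr using H
  set V : Set ℂ := ⋃ (x : ℝ) (hx : x ∈ Ioo a b), Metric.ball (x:ℂ) (ρ x hx) with hV
  have hVo : IsOpen V := isOpen_iUnion fun x => isOpen_iUnion fun hx => Metric.isOpen_ball
  have hVU : V ⊆ U := by
    intro z hz
    obtain ⟨x, hx, hzb⟩ := mem_iUnion₂.mp hz
    exact hsubU x hx hzb
  have hIV : ∀ t ∈ Ioo a b, (t:ℂ) ∈ V := by
    intro t ht
    exact mem_iUnion₂.2 ⟨t, ht, by simpa using hρ t ht⟩
  -- consistency of local extensions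
  have hcons : ∀ (x : ℝ) (hx : x ∈ Ioo a b) (y : ℝ) (hy : y ∈ Ioo a b) (z : ℂ),
      z ∈ Metric.ball (x:ℂ) (ρ x hx) → z ∈ Metric.ball (y:ℂ) (ρ y hy) →
      F x hx z = F y hy z := by
    intro x hx y hy z hzx hzy
    set ρx := ρ x hx; set ρy := ρ y hy
    set s : Set ℂ := Metric.ball (x:ℂ) ρx ∩ Metric.ball (y:ℂ) ρy with hsdef
    have hso : IsOpen s := Metric.isOpen_ball.inter Metric.isOpen_ball
    have hsc : IsPreconnected s :=
      ((convex_ball _ _).inter (convex_ball _ _)).isPreconnected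
    have hxy : |x - y| < ρx + ρy := by
      have h1 : dist (x:ℂ) z < ρx := by
        rw [dist_comm]; exact Metric.mem_ball.mp hzx
      have h2 : dist z (y:ℂ) < ρy := Metric.mem_ball.mp hzy
      have := lt_of_le_of_lt (dist_triangle (x:ℂ) z (y:ℂ)) (add_lt_add h1 h2)
      rw [dist_ofReal', Real.dist_eq] at this
      exact this
    set t₁ : ℝ := (x * ρy + y * ρx) / (ρx + ρy) with ht₁
    have hρxy : 0 < ρx + ρy := add_pos (hρ x hx) (hρ y hy)
    have hne : ρx + ρy ≠ 0 := ne_of_gt hρxy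
    have ht₁x : |t₁ - x| < ρx := by
      have : t₁ - x = ρx * (y - x) / (ρx + ρy) := by
        rw [ht₁, div_sub' hne]
        congr 1
        ring
      have habs : |y - x| < ρx + ρy := by rw [abs_sub_comm]; exact hxy
      rw [this, abs_div, abs_of_pos hρxy, div_lt_iff₀ hρxy, abs_mul,
        abs_of_pos (hρ x hx)]
      nlinarith [abs_nonneg (y - x), hρ x hx]
    have ht₁y : |t₁ - y| < ρy := by
      have : t₁ - y = ρy * (x - y) / (ρx + ρy) := by
        rw [ht₁, div_sub' hne]
        congr 1
        ring
      rw [this, abs_div, abs_of_pos hρxy, div_lt_iff₀ hρxy, abs_mul,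
        abs_of_pos (hρ y hy)]
      nlinarith [abs_nonneg (x - y), hρ y hy]
    have ht₁s : (t₁:ℂ) ∈ s := by
      constructor
      · rw [Metric.mem_ball, dist_ofReal', Real.dist_eq]; exact ht₁x
      · rw [Metric.mem_ball, dist_ofReal', Real.dist_eq]; exact ht₁y
    obtain ⟨δ, hδ, hδs⟩ := Metric.isOpen_iff.mp hso _ ht₁s
    have hsub2 : ∀ t ∈ Ioo (t₁ - δ) (t₁ + δ), (t:ℂ) ∈ s := by
      intro t ht
      apply hδs
      rw [Metric.mem_ball, dist_ofReal', Real.dist_eq, abs_sub_lt_iff]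
      constructor <;> [linarith [ht.2]; linarith [ht.1]]
    have hzero : ∀ t ∈ Ioo (t₁ - δ) (t₁ + δ),
        (fun w => F x hx w - F y hy w) ↑t = 0 := by
      intro t ht
      have hts := hsub2 t ht
      have h1 := hFr x hx t (hsdef ▸ hts).1
      have h2 := hFr y hy t (hsdef ▸ hts).2
      simp [h1, h2]
    have := eqOn_zero_of_real_zero hso hsc
      (((hFd x hx).mono inter_subset_left).sub ((hFd y hy).mono inter_subset_right))
      (by linarith : t₁ - δ < t₁ + δ) hsub2 hzero
    have hz := this z ⟨hzx, hzy⟩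
    exact sub_eq_zero.mp hz
  -- glued function
  classical
  set Fg : ℂ → ℂ := fun z =>
    if h : ∃ x : ℝ, ∃ hx : x ∈ Ioo a b, z ∈ Metric.ball (x:ℂ) (ρ x hx)
    then F h.choose h.choose_spec.choose z else 0 with hFg
  have hFgeq : ∀ (x : ℝ) (hx : x ∈ Ioo a b) (z : ℂ),
      z ∈ Metric.ball (x:ℂ) (ρ x hx) → Fg z = F x hx z := by
    intro x hx z hz
    have hex : ∃ x : ℝ, ∃ hx : x ∈ Ioo a b, z ∈ Metric.ball (x:ℂ) (ρ x hx) := ⟨x, hx, hz⟩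
    rw [hFg]
    simp only [dif_pos hex]
    exact hcons _ hex.choose_spec.choose _ hx z hex.choose_spec.choose_spec hz
  refine ⟨V, Fg, hVo, hVU, hIV, ?_, ?_⟩
  · intro z hz
    obtain ⟨x, hx, hzb⟩ := mem_iUnion₂.mp hz
    have hball : Metric.ball (x:ℂ) (ρ x hx) ∈ nhds z := Metric.isOpen_ball.mem_nhds hzb
    have hda : DifferentiableAt ℂ (F x hx) z := (hFd x hx).differentiableAt hball
    have : DifferentiableAt ℂ Fg z := by
      refine hda.congr_of_eventuallyEq ?_
      filter_upwards [hball] with w hw using hFgeq x hx w hw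
    exact this.differentiableWithinAt
  · intro t ht
    rw [hFgeq t ht _ (by simpa using hρ t ht)]
    exact hFr t ht t (by simpa using hρ t ht)

end Ext

end Helpers


section Main
open Set
open scoped Topology

/-- Complex-to-real transfer: if the holomorphic function `G`, real-valued on the
nonempty open interval `I ⊆ U ∩ ℝ`, satisfies the strong-minimality dichotomy of
order `n ≥ 1` over `ℂ` on every connected open `V` with `I ⊆ V ⊆ U`, then its real
restriction satisfies the strong-minimality dichotomy of order `n` on `I`. -/
theorem strongMinDichotomy_of_complex
    (U : Set ℂ) (hUo : IsOpen U) (hUc : IsConnected U)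
    (I : Set ℝ) (a b : ℝ) (hab : a < b) (hI : I = Set.Ioo a b)
    (hIU : ∀ t ∈ I, (t : ℂ) ∈ U)
    (n : ℕ) (hn : 1 ≤ n)
    (G : ℂ → ℂ) (hG : DifferentiableOn ℂ G U)
    (hreal : ∀ t ∈ I, (G (t : ℂ)).im = 0)
    (hdich : ∀ V : Set ℂ, IsOpen V → IsConnected V → V ⊆ U → (∀ t ∈ I, (t : ℂ) ∈ V) →
      ∀ (k : ℕ) (h : Fin k → ℂ → ℂ), (∀ i, DifferentiableOn ℂ (h i) V) →
        (∀ i, CAlgebraicOver V h (deriv (h i))) →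
        (¬ CAlgDepOn V h fun j : Fin n => deriv^[(j : ℕ)] G) ∨ CAlgebraicOver V h G) :
    StrongMinDichotomy I n (fun t => (G (t : ℂ)).re) := by
  subst hI
  intro k h hana halg
  -- extend each hᵢ holomorphically
  choose Vi Hi hVio hViU hIVi hHid hHieq using fun i : Fin k =>
    exists_holo_ext (h i) (hana i) U hUo hIU
  set t₀ : ℝ := (a + b) / 2 with ht₀def
  have ht₀ : t₀ ∈ Ioo a b := ⟨by rw [ht₀def]; linarith, by rw [ht₀def]; linarith⟩
  set W : Set ℂ := U ∩ ⋂ i, Vi i with hWdef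
  have hWo : IsOpen W := hUo.inter (isOpen_iInter_of_finite fun i => hVio i)
  have hIW : ∀ t ∈ Ioo a b, (t:ℂ) ∈ W := fun t ht =>
    ⟨hIU t ht, mem_iInter.2 fun i => hIVi i t ht⟩
  set V : Set ℂ := connectedComponentIn W ((t₀ : ℝ) : ℂ) with hVdef
  have hVo : IsOpen V := hWo.connectedComponentIn
  have hVc : IsConnected V := isConnected_connectedComponentIn_iff.2 (hIW t₀ ht₀)
  have hVsubW : V ⊆ W := connectedComponentIn_subset W _
  have hVU : V ⊆ U := hVsubW.trans inter_subset_left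
  have hVVi : ∀ i, V ⊆ Vi i := fun i =>
    hVsubW.trans (inter_subset_right.trans (iInter_subset _ i))
  have hIV : ∀ t ∈ Ioo a b, (t:ℂ) ∈ V := by
    have hS : IsPreconnected ((fun t : ℝ => (t:ℂ)) '' Ioo a b) :=
      (isPreconnected_Ioo).image _ Complex.continuous_ofReal.continuousOn
    have hsub : ((fun t : ℝ => (t:ℂ)) '' Ioo a b) ⊆ W := by
      rintro _ ⟨t, ht, rfl⟩; exact hIW t ht
    intro t ht
    exact hS.subset_connectedComponentIn ⟨t₀, ht₀, rfl⟩ hsub ⟨t, ht, rfl⟩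
  have hmatch : ∀ i, ∀ t ∈ Ioo a b, Hi i ↑t = ↑(h i t) := hHieq
  have hderivmatch : ∀ i, ∀ t ∈ Ioo a b, deriv (Hi i) ↑t = ↑(deriv (h i) t) := by
    intro i t ht
    apply deriv_ext_eq
    · exact (hHid i).differentiableAt ((hVio i).mem_nhds (hIVi i t ht))
    · exact (hana i t ht).differentiableAt
    · filter_upwards [Ioo_mem_nhds ht.1 ht.2] with s hs using hHieq i s hs
  have hHd' : ∀ i, DifferentiableOn ℂ (Hi i) V := fun i => (hHid i).mono (hVVi i)
  have hderivd : ∀ i, DifferentiableOn ℂ (deriv (Hi i)) V := fun i =>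
    ((((hHid i).analyticOnNhd (hVio i)).deriv).differentiableOn).mono (hVVi i)
  have hCalg : ∀ i, CAlgebraicOver V Hi (deriv (Hi i)) := by
    intro i
    obtain ⟨Q, hQ0, hQz⟩ := halg i
    refine ⟨MvPolynomial.map Complex.ofRealHom Q, map_ofReal_ne_zero Q hQ0, ?_⟩
    have hdiff := differentiableOn_aux Hi ![deriv (Hi i)] V hHd'
      (fun j => by fin_cases j; exact hderivd i) (MvPolynomial.map Complex.ofRealHom Q)
    have hzero : ∀ t ∈ Ioo a b,
        (fun z => MvPolynomial.eval
          (Fin.append (Fin.cons z fun j => Hi j z) fun j => (![deriv (Hi i)]) j z)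
          (MvPolynomial.map Complex.ofRealHom Q)) ↑t = 0 := by
      intro t ht
      have hv := vec_match Hi ![deriv (Hi i)] h ![deriv (h i)] t
        (fun j => hmatch j t ht)
        (fun j => by fin_cases j; simpa using hderivmatch i t ht)
      show MvPolynomial.eval _ _ = 0
      rw [hv, eval_map_ofReal', hQz t ht, Complex.ofReal_zero]
    exact fun z hz =>
      eqOn_zero_of_real_zero hVo hVc.isPreconnected hdiff hab hIV hzero z hz
  rcases hdich V hVo hVc hVU hIV k Hi hHd' hCalg with hnd | hAlg
  · left
    rintro ⟨P, hP0, hPz⟩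
    apply hnd
    refine ⟨MvPolynomial.map Complex.ofRealHom P, map_ofReal_ne_zero P hP0, ?_⟩
    have hGd : ∀ j : Fin n, DifferentiableOn ℂ (deriv^[(j:ℕ)] G) V := fun j =>
      (iter_deriv_diffOn hUo hG _).mono hVU
    have hdiff := differentiableOn_aux Hi (fun j : Fin n => deriv^[(j:ℕ)] G) V hHd' hGd
      (MvPolynomial.map Complex.ofRealHom P)
    have hzero : ∀ t ∈ Ioo a b,
        (fun z => MvPolynomial.eval
          (Fin.append (Fin.cons z fun j => Hi j z) fun j : Fin n => deriv^[(j:ℕ)] G z)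
          (MvPolynomial.map Complex.ofRealHom P)) ↑t = 0 := by
      intro t ht
      have hv := vec_match Hi (fun j : Fin n => deriv^[(j:ℕ)] G) h
        (fun j : Fin n => deriv^[(j:ℕ)] fun s : ℝ => (G ↑s).re) t
        (fun j => hmatch j t ht)
        (fun j => iter_deriv_match hUo hG hIU hreal (j:ℕ) t ht)
      show MvPolynomial.eval _ _ = 0
      rw [hv, eval_map_ofReal', hPz t ht, Complex.ofReal_zero]
    exact fun z hz =>
      eqOn_zero_of_real_zero hVo hVc.isPreconnected hdiff hab hIV hzero z hz
  · right
    obtain ⟨P, hP0, hPz⟩ := hAlg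
    have hz0 : ∀ t ∈ Ioo a b,
        MvPolynomial.eval (fun idx =>
          (((Fin.append (Fin.cons t fun j => h j t)
            fun j : Fin 1 => (![fun s : ℝ => (G ↑s).re]) j t) idx : ℝ) : ℂ)) P = 0 := by
      intro t ht
      have hv := vec_match Hi ![G] h ![fun s : ℝ => (G ↑s).re] t
        (fun j => hmatch j t ht)
        (fun j => by
          fin_cases j
          simpa using Complex.ext (by simp) (by simpa using hreal t ht))
      rw [← hv]
      exact hPz ↑t (hIV t ht)
    rcases parts_ne_zero P hP0 with h1 | h1
    · exact ⟨rePart P, h1, fun t ht => (eval_real_zero P _ (hz0 t ht)).1⟩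
    · exact ⟨imPart P, h1, fun t ht => (eval_real_zero P _ (hz0 t ht)).2⟩

end Main
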